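/- Let b ≥ 2 be an integer, let m, n ∈ ℕ with m ≤ n, and let C₁, C₂ be n×m matrices over Z_b = ℤ/bℤ. Let ρ be a positive integer with ρ ≤ n such that for every choice of d₁, d₂ ∈ ℕ₀ with d₁ + d₂ = ρ, the first d₁ rows of C₁ together with the first d₂ rows of C₂ are linearly independent over Z_b. Then every (k₁, k₂) ∈ P⊥ with (k₁, k₂) ≠ (0, 0) satisfies μ₁(k₁) + μ₁(k₂) > ρ. -/

import Mathlib

def digitVec (b n k : ℕ) : Fin n → ZMod b := fun i => (((k / b ^ (i : ℕ)) % b : ℕ) : ZMod b)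

def mu1 (b k : ℕ) : ℕ := if k = 0 then 0 else Nat.log b k + 1

lemma sum_trunc {M : Type*} [AddCommMonoid M] {n d : ℕ} (hdn : d ≤ n) (f : Fin n → M)
    (hf : ∀ i : Fin n, d ≤ (i : ℕ) → f i = 0) :
    ∑ i : Fin d, f (Fin.castLE hdn i) = ∑ i : Fin n, f i := by
  set F : ℕ → M := fun i => if h : i < n then f ⟨i, h⟩ else 0 with hF
  have h1 : ∑ i : Fin d, f (Fin.castLE hdn i) = ∑ i : Fin d, F (i : ℕ) := by
    refine Finset.sum_congr rfl fun i _ => ?_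
    simp [hF, dif_pos (lt_of_lt_of_le i.isLt hdn), Fin.castLE]
  have h2 : ∑ i : Fin n, f i = ∑ i : Fin n, F (i : ℕ) := by
    refine Finset.sum_congr rfl fun i _ => ?_
    simp [hF, i.isLt]
  rw [h1, h2, Fin.sum_univ_eq_sum_range, Fin.sum_univ_eq_sum_range]
  refine Finset.sum_subset (Finset.range_subset_range.mpr hdn) fun i hi hni => ?_
  simp only [Finset.mem_range] at hi hni
  simp only [hF, dif_pos hi]
  exact hf ⟨i, hi⟩ (Nat.le_of_not_lt hni)

theorem min_nrt_weight_of_row_independence (b m n : ℕ) (hb : 2 ≤ b) (hmn : m ≤ n)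
    (C1 C2 : Matrix (Fin n) (Fin m) (ZMod b)) (ρ : ℕ) (hρ1 : 1 ≤ ρ) (hρn : ρ ≤ n)
    (hindep : ∀ d1 d2 : ℕ, ∀ hd : d1 + d2 = ρ,
      LinearIndependent (ZMod b)
        (Sum.elim
          (fun i : Fin d1 => C1 ⟨(i : ℕ), by have := i.isLt; omega⟩)
          (fun i : Fin d2 => C2 ⟨(i : ℕ), by have := i.isLt; omega⟩)))
    (k1 k2 : ℕ) (hk1 : k1 < b ^ n) (hk2 : k2 < b ^ n)
    (hdual : Matrix.mulVec C1.transpose (digitVec b n k1) +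
        Matrix.mulVec C2.transpose (digitVec b n k2) = 0)
    (hne : ¬(k1 = 0 ∧ k2 = 0)) :
    ρ < mu1 b k1 + mu1 b k2 := by
  have hb1 : 1 < b := hb
  have : NeZero b := ⟨by omega⟩
  by_contra hcon
  push_neg at hcon
  set d1 := mu1 b k1 with hd1
  have hd1ρ : d1 ≤ ρ := le_trans (Nat.le_add_right _ _) hcon
  set d2 := ρ - d1 with hd2
  have hd : d1 + d2 = ρ := by omega
  have hd1n : d1 ≤ n := by omega
  have hd2n : d2 ≤ n := by omega
  have hμ2 : mu1 b k2 ≤ d2 := by omega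
  have hzero : ∀ k i, mu1 b k ≤ i → ((k / b ^ i) % b : ℕ) = 0 := by
    intro k i hi
    rcases eq_or_ne k 0 with rfl | hk
    · simp
    · have hki : k < b ^ i := by
        calc k < b ^ (Nat.log b k + 1) := Nat.lt_pow_succ_log_self hb1 k
        _ ≤ b ^ i := Nat.pow_le_pow_right (by omega) (by simpa [mu1, hk] using hi)
      simp [Nat.div_eq_of_lt hki]
  have h1zero : ∀ i : Fin n, d1 ≤ (i : ℕ) → digitVec b n k1 i = 0 := by
    intro i hi; simp [digitVec, hzero k1 i hi]
  have h2zero : ∀ i : Fin n, d2 ≤ (i : ℕ) → digitVec b n k2 i = 0 := by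
    intro i hi; simp [digitVec, hzero k2 i (le_trans hμ2 hi)]
  -- top digit nonzero
  have htop : ∀ k, k ≠ 0 → (((k / b ^ Nat.log b k) % b : ℕ) : ZMod b) ≠ 0 := by
    intro k hk
    have h1 : 1 ≤ k / b ^ Nat.log b k :=
      Nat.one_le_div_iff (Nat.pow_pos (by omega)) |>.mpr (Nat.pow_log_le_self b hk)
    have h2 : k / b ^ Nat.log b k < b := by
      have := Nat.lt_pow_succ_log_self hb1 k
      rw [pow_succ] at this
      exact Nat.div_lt_of_lt_mul this
    rw [Nat.mod_eq_of_lt h2]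
    intro hcast
    rw [ZMod.natCast_eq_zero_iff] at hcast
    exact absurd (Nat.le_of_dvd (by omega) hcast) (by omega)
  have hLI := hindep d1 d2 hd
  rw [Fintype.linearIndependent_iff] at hLI
  have key := hLI (Sum.elim
      (fun i : Fin d1 => digitVec b n k1 (Fin.castLE hd1n i))
      (fun i : Fin d2 => digitVec b n k2 (Fin.castLE hd2n i))) ?_
  · rcases Decidable.not_and_iff_or_not.mp hne with hk | hk
    · have hL : Nat.log b k1 < d1 := by simp [hd1, mu1, hk]
      have := key (Sum.inl ⟨Nat.log b k1, hL⟩)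
      simp only [Sum.elim_inl] at this
      exact htop k1 hk (by simpa [digitVec, Fin.castLE] using this)
    · have hk2ne : k2 ≠ 0 := hk
      have hL : Nat.log b k2 < d2 := by
        have : mu1 b k2 = Nat.log b k2 + 1 := by simp [mu1, hk2ne]
        omega
      have := key (Sum.inr ⟨Nat.log b k2, hL⟩)
      simp only [Sum.elim_inr] at this
      exact htop k2 hk2ne (by simpa [digitVec, Fin.castLE] using this)
  · funext j
    have hd' := congrFun hdual j
    simp only [Matrix.mulVec, Matrix.transpose_apply, dotProduct, Pi.add_apply,
      Pi.zero_apply] at hd'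
    have e1 : ∑ i : Fin d1, digitVec b n k1 (Fin.castLE hd1n i) * C1 (Fin.castLE hd1n i) j
        = ∑ i : Fin n, C1 i j * digitVec b n k1 i := by
      rw [show (∑ i : Fin n, C1 i j * digitVec b n k1 i)
          = ∑ i : Fin n, digitVec b n k1 i * C1 i j from
        Finset.sum_congr rfl fun i _ => mul_comm _ _]
      exact sum_trunc hd1n (fun i => digitVec b n k1 i * C1 i j)
        (fun i hi => by simp [h1zero i hi])
    have e2 : ∑ i : Fin d2, digitVec b n k2 (Fin.castLE hd2n i) * C2 (Fin.castLE hd2n i) j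
        = ∑ i : Fin n, C2 i j * digitVec b n k2 i := by
      rw [show (∑ i : Fin n, C2 i j * digitVec b n k2 i)
          = ∑ i : Fin n, digitVec b n k2 i * C2 i j from
        Finset.sum_congr rfl fun i _ => mul_comm _ _]
      exact sum_trunc hd2n (fun i => digitVec b n k2 i * C2 i j)
        (fun i hi => by simp [h2zero i hi])
    simp only [Finset.sum_apply, Pi.smul_apply, smul_eq_mul, Fintype.sum_sum_type,
      Sum.elim_inl, Sum.elim_inr, Pi.zero_apply]
    rw [← hd']
    rw [← e1, ← e2]
    congr 1
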